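/- For every odd integer n ≥ 13, if G is a triangle-free simple graph on n vertices and x₁x₂ is an edge of G with deg_G(x₂) ≤ (2/5)n, then the number of cycles of G containing the edge x₁x₂ is at most n² + 0.976·n·(((n−3)/2)!)². -/

import Mathlib

open SimpleGraph

/-- The number of cycles of `G` (as distinct cycle subgraphs) that contain the edge `xy`. -/
noncomputable def cycleCountThroughEdge {V : Type*} (G : SimpleGraph V) (x y : V) : ℕ :=
  Nat.card {H : G.Subgraph //
    (∃ (u : V) (w : G.Walk u u), w.IsCycle ∧ w.toSubgraph = H) ∧ H.Adj x y}

/-! ### Arithmetic layer -/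

def dpA : ℕ → ℕ
  | 0 => 1
  | (r+1) => ((r+1)/2) * dpA r + ((r+1) % 2)

def dpBf (r t : ℕ) : ℕ :=
  if r % 2 = 0 then (min t (r/2 + 1)) * dpA r
  else t * ((min (r - t) (r/2 + 1)) * dpA (r-1) + 1)

def dpBt (r t : ℕ) : ℕ :=
  if r % 2 = 0 then
    (if t ≤ r/2 then t * dpA r + 1
     else if t = r/2 + 1 then (r/2 + 1) * (dpA r - 1) + 1
     else (r/2 + 1) * dpA r + 1)
  else t * ((min (r - t) (r/2 + 1)) * dpA (r-1)) + 1

def dpCBt (r t : ℕ) : ℕ :=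
  if r % 2 = 0 then
    (if r - t ≤ r/2 - 1 then (r - t) * ((r/2) * dpA (r-2) + 1) else dpA r)
  else (min (r - t) (r/2 + 1)) * dpA (r-1)

def dpCBf (r t : ℕ) : ℕ :=
  if r % 2 = 0 then max (dpCBt r t) 1
  else (min (r - t) (r/2 + 1)) * dpA (r-1) + 1

lemma dpA_pos : ∀ r, 0 < dpA r
  | 0 => by simp [dpA]
  | (r+1) => by
      have h := dpA_pos r
      simp only [dpA]
      rcases Nat.eq_zero_or_pos ((r+1) % 2) with h2 | h2
      · have h3 : 0 < (r+1)/2 := by omega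
        have := Nat.mul_pos h3 h
        omega
      · omega

lemma dpA_odd (s : ℕ) : dpA (2*s+1) = s * dpA (2*s) + 1 := by
  have h1 : (2*s+1) / 2 = s := by omega
  have h2 : (2*s+1) % 2 = 1 := by omega
  conv_lhs => rw [show 2*s+1 = (2*s)+1 from rfl, dpA]
  rw [show (2*s+1)/2 = s from h1, show (2*s+1)%2 = 1 from h2]

lemma dpA_even (s : ℕ) : dpA (2*s+2) = (s+1) * dpA (2*s+1) := by
  have h1 : (2*s+2) / 2 = s+1 := by omega
  have h2 : (2*s+2) % 2 = 0 := by omega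
  conv_lhs => rw [show 2*s+2 = (2*s+1)+1 from rfl, dpA]
  rw [show (2*s+1+1)/2 = s+1 from h1, show (2*s+1+1)%2 = 0 from h2]
  omega

lemma dpA_even_ge (s : ℕ) : s ≤ dpA (2*s) := by
  cases s with
  | zero => simp
  | succ m =>
      rw [show 2*(m+1) = 2*m+2 from by ring, dpA_even]
      calc m+1 = (m+1) * 1 := by ring
      _ ≤ (m+1) * dpA (2*m+1) := Nat.mul_le_mul_left _ (dpA_pos _)

lemma dpBt_pos (r t : ℕ) : 1 ≤ dpBt r t := by
  unfold dpBt
  by_cases h : r % 2 = 0 <;> simp only [h, if_true, if_false] <;> [skip; omega]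
  by_cases h1 : t ≤ r/2 <;> simp only [h1, if_true, if_false] <;> [omega; skip]
  by_cases h2 : t = r/2 + 1 <;> simp only [h2, if_true, if_false] <;> omega

/-- helper : odd-level `dpBf` value -/
lemma dpBf_odd (s t : ℕ) : dpBf (2*s+1) t = t * ((min (2*s+1 - t) (s + 1)) * dpA (2*s) + 1) := by
  have h2 : (2*s+1) % 2 = 1 := by omega
  have h1 : (2*s+1) / 2 = s := by omega
  simp [dpBf, h2, h1]

lemma dpBt_odd (s t : ℕ) : dpBt (2*s+1) t = t * ((min (2*s+1 - t) (s + 1)) * dpA (2*s)) + 1 := by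
  have h2 : (2*s+1) % 2 = 1 := by omega
  have h1 : (2*s+1) / 2 = s := by omega
  simp [dpBt, h2, h1]

lemma dpBf_even (s t : ℕ) : dpBf (2*s) t = (min t (s+1)) * dpA (2*s) := by
  have h2 : (2*s) % 2 = 0 := by omega
  have h1 : (2*s) / 2 = s := by omega
  simp [dpBf, h2, h1]

lemma dpBt_even (s t : ℕ) : dpBt (2*s) t =
    (if t ≤ s then t * dpA (2*s) + 1
     else if t = s + 1 then (s + 1) * (dpA (2*s) - 1) + 1
     else (s + 1) * dpA (2*s) + 1) := by
  have h2 : (2*s) % 2 = 0 := by omega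
  have h1 : (2*s) / 2 = s := by omega
  simp [dpBt, h2, h1]

lemma dpCBt_odd (s t : ℕ) : dpCBt (2*s+1) t = (min (2*s+1 - t) (s + 1)) * dpA (2*s) := by
  have h2 : (2*s+1) % 2 = 1 := by omega
  have h1 : (2*s+1) / 2 = s := by omega
  simp [dpCBt, h2, h1]

lemma dpCBf_odd (s t : ℕ) : dpCBf (2*s+1) t = (min (2*s+1 - t) (s + 1)) * dpA (2*s) + 1 := by
  have h2 : (2*s+1) % 2 = 1 := by omega
  have h1 : (2*s+1) / 2 = s := by omega
  simp [dpCBf, h2, h1]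

lemma dpCBt_even (s t : ℕ) : dpCBt (2*s+2) t =
    (if 2*s+2 - t ≤ s then (2*s+2 - t) * ((s+1) * dpA (2*s) + 1) else dpA (2*s+2)) := by
  have h2 : (2*s+2) % 2 = 0 := by omega
  have h1 : (2*s+2) / 2 = s+1 := by omega
  have h3 : (2*s+2) - 2 = 2*s := by omega
  simp [dpCBt, h2, h1, h3]

lemma dpCBf_even (s t : ℕ) : dpCBf (2*s+2) t = max (dpCBt (2*s+2) t) 1 := by
  have h2 : (2*s+2) % 2 = 0 := by omega
  simp [dpCBf, h2]

/-- key quadratic fact : for `d + e + 1 = s`, `(2s+1-d)*(d*A+1) ≤ (s+1)*(s*A+1)` -/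
lemma dp_quad (s d A : ℕ) (hd : d + 1 ≤ s) (hA : 1 ≤ A) :
    (2*s+1-d) * (d*A+1) ≤ (s+1) * (s*A+1) := by
  obtain ⟨e, he⟩ : ∃ e, d + e + 1 = s := ⟨s - d - 1, by omega⟩
  have h1 : 2*s+1-d = s + e + 2 := by omega
  rw [h1]
  subst he
  nlinarith [Nat.mul_le_mul_left (e*(e+1)) hA, sq_nonneg e]

lemma dp_child_f (r t t' : ℕ) (hr : 1 ≤ r) (ht1 : 1 ≤ t) (htr : t ≤ r) (ht' : t' + t ≤ r) :
    dpBf (r-1) t' ≤ dpCBt r t := by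
  rcases Nat.even_or_odd r with ⟨s, hs⟩ | ⟨s, hs⟩
  · -- r even, = 2s, s ≥ 1; write r = 2(s-1)+2
    obtain ⟨m, hm⟩ : ∃ m, r = 2*m+2 := ⟨s - 1, by omega⟩
    subst hm
    have h1 : 2*m+2-1 = 2*m+1 := by omega
    rw [h1, dpBf_odd, dpCBt_even]
    set A := dpA (2*m) with hA
    have hA1 : 1 ≤ A := dpA_pos _
    by_cases hc : 2*m+2 - t ≤ m
    · rw [if_pos hc]
      have h2 : t' ≤ m := by omega
      have h3 : min (2*m+1-t') (m+1) = m+1 := min_eq_right (by omega)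
      rw [h3]
      exact Nat.mul_le_mul (by omega) le_rfl
    · rw [if_neg hc]
      rw [dpA_even, dpA_odd]
      -- goal : t' * (min (2*m+1-t') (m+1) * A + 1) ≤ (m+1) * (m*A+1)
      rcases Nat.lt_or_ge t' (m+1) with h4 | h4
      · have h5 : min (2*m+1-t') (m+1) = m+1 := min_eq_right (by omega)
        rw [h5]
        calc t' * ((m+1)*A + 1) ≤ m * ((m+1)*A+1) := Nat.mul_le_mul (by omega) le_rfl
        _ = m*(m+1)*A + m := by ring
        _ ≤ (m+1)*(m*A+1) := by nlinarith []
      · rcases Nat.eq_or_lt_of_le h4 with h5 | h5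
        · have h6 : min (2*m+1-t') (m+1) = m := by
            rw [← h5, show 2*m+1-(m+1) = m from by omega]
            exact min_eq_left (by omega)
          rw [h6, ← h5, ← hA]
        · have h7 : t' ≤ 2*m+1 := by omega
          have h8 : 2*m+1-t' + 1 ≤ m := by omega
          have h9 : min (2*m+1-t') (m+1) = 2*m+1-t' := min_eq_left (by omega)
          rw [h9]
          have := dp_quad m (2*m+1-t') A h8 hA1
          have h10 : 2*m+1-(2*m+1-t') = t' := by omega
          rw [h10] at this
          exact this
  · -- r odd = 2s+1
    have hs' : r = 2*s+1 := by omega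
    subst hs'
    have h1 : 2*s+1-1 = 2*s := by omega
    rw [h1, dpBf_even, dpCBt_odd]
    refine Nat.mul_le_mul ?_ le_rfl
    have : t' ≤ 2*s+1-t := by omega
    exact le_trans (min_le_min_right _ this) le_rfl

lemma dp_child_t (r t t' : ℕ) (hr : 1 ≤ r) (ht1 : 1 ≤ t) (htr : t ≤ r) (ht' : t' + t ≤ r) :
    dpBt (r-1) t' ≤ dpCBf r t := by
  rcases Nat.even_or_odd r with ⟨s, hs⟩ | ⟨s, hs⟩
  · obtain ⟨m, hm⟩ : ∃ m, r = 2*m+2 := ⟨s - 1, by omega⟩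
    subst hm
    rw [dpCBf_even]
    rcases Nat.eq_zero_or_pos t' with h0 | h0
    · subst h0
      have h1 : 2*m+2-1 = 2*m+1 := by omega
      rw [h1, dpBt_odd]
      simp
    · calc dpBt (2*m+2-1) t' ≤ dpBf (2*m+2-1) t' := by
            have h1 : 2*m+2-1 = 2*m+1 := by omega
            rw [h1, dpBt_odd, dpBf_odd]
            have := Nat.mul_le_mul_left t' (Nat.le_add_right ((min (2*m+1-t') (m+1)) * dpA (2*m)) 1)
            calc t' * ((min (2*m+1-t') (m+1)) * dpA (2*m)) + 1
                ≤ t' * ((min (2*m+1-t') (m+1)) * dpA (2*m)) + t' := by omega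
              _ = t' * ((min (2*m+1-t') (m+1)) * dpA (2*m) + 1) := by ring
      _ ≤ dpCBt (2*m+2) t := dp_child_f _ t t' (by omega) ht1 htr ht'
      _ ≤ max (dpCBt (2*m+2) t) 1 := le_max_left _ _
  · have hs' : r = 2*s+1 := by omega
    subst hs'
    have h1 : 2*s+1-1 = 2*s := by omega
    rw [h1, dpBt_even, dpCBf_odd]
    set A := dpA (2*s) with hA
    have hA1 : 1 ≤ A := dpA_pos _
    by_cases h2 : t' ≤ s
    · rw [if_pos h2]
      have : t' ≤ min (2*s+1-t) (s+1) := by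
        refine le_min (by omega) (by omega)
      have := Nat.mul_le_mul this (le_refl A)
      omega
    · rw [if_neg h2]
      have hm : min (2*s+1-t) (s+1) = s+1 := min_eq_right (by omega)
      rw [hm]
      by_cases h3 : t' = s+1
      · rw [if_pos h3]
        have : (s+1) * (A-1) ≤ (s+1) * A := Nat.mul_le_mul_left _ (by omega)
        omega
      · rw [if_neg h3]

lemma dp_cbt_le_cbf (r t : ℕ) : dpCBt r t ≤ dpCBf r t := by
  unfold dpCBf
  split_ifs with h
  · exact le_max_left _ _
  · unfold dpCBt
    simp only [if_neg h]
    omega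

lemma dp_assemble_f (r t : ℕ) (ht1 : 1 ≤ t) (htr : t ≤ r) :
    t * dpCBf r t ≤ dpBf r t := by
  rcases Nat.even_or_odd r with ⟨s, hs⟩ | ⟨s, hs⟩
  · obtain ⟨m, hm⟩ : ∃ m, r = 2*m+2 := ⟨s - 1, by omega⟩
    subst hm
    rw [dpCBf_even, dpCBt_even, show (2*m+2 : ℕ) = 2*(m+1) from by ring, dpBf_even (m+1),
        show (2*(m+1) : ℕ) = 2*m+2 from by ring]
    set A := dpA (2*m) with hA
    have hA1 : 1 ≤ A := dpA_pos _
    have hApos : 1 ≤ dpA (2*m+2) := dpA_pos _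
    have hAe : dpA (2*m+2) = (m+1) * (m*A+1) := by rw [dpA_even, dpA_odd, ← hA]
    rcases Nat.lt_or_ge t (m+2) with h1 | h1
    · have hc : ¬ (2*m+2-t ≤ m) := by omega
      rw [if_neg hc, max_eq_left hApos, min_eq_left (by omega)]
    · have hc : 2*m+2-t ≤ m := by omega
      rw [if_pos hc, min_eq_right (by omega)]
      obtain ⟨c, hc2⟩ : ∃ c, 2*m+2-t = c := ⟨_, rfl⟩
      have hct : c + t = 2*m+2 := by omega
      rw [hc2]
      rcases Nat.eq_or_lt_of_le h1 with h2 | h2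
      · -- t = m+2, c = m
        have hcm : c = m := by omega
        subst hcm
        rcases Nat.eq_zero_or_pos c with h3 | h3
        · subst h3
          simp only [Nat.zero_mul, Nat.max_eq_right (by norm_num : (0:ℕ) ≤ 1)]
          have : t = 2 := by omega
          subst this
          rw [hAe]
          nlinarith []
        · have hmax : max (c * ((c+1)*A+1)) 1 = c * ((c+1)*A+1) := by
            apply max_eq_left
            have := Nat.mul_le_mul h3 (show 1 ≤ (c+1)*A+1 by omega)
            omega
          rw [hmax, hAe, ← h2]
          nlinarith []
      · -- t ≥ m+3, c ≤ m-1
        have hc3 : c + 1 ≤ m := by omega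
        rcases Nat.eq_zero_or_pos c with h3 | h3
        · subst h3
          rw [max_eq_right (by omega), hAe]
          have e1 : 2*(m+1) ≤ (m+1+1)*((m+1)*(m*A+1)) := by
            calc 2*(m+1) = 2*((m+1)*1) := by ring
            _ ≤ (m+1+1)*((m+1)*(m*A+1)) :=
                Nat.mul_le_mul (by omega) (Nat.mul_le_mul_left _ (by omega))
          omega
        · have hmax : max (c * ((m+1)*A+1)) 1 = c * ((m+1)*A+1) := by
            apply max_eq_left
            have := Nat.mul_le_mul h3 (show 1 ≤ (m+1)*A+1 by omega)
            omega
          rw [hmax, hAe]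
          obtain ⟨f, hf⟩ : ∃ f, t = m+3+f := ⟨t - (m+3), by omega⟩
          have hcf : c + f + 1 = m := by omega
          subst hf
          subst hcf
          nlinarith [hA1, sq_nonneg f, sq_nonneg (f+1), sq_nonneg (f+2)]
  · have hs' : r = 2*s+1 := by omega
    subst hs'
    rw [dpCBf_odd, dpBf_odd]

lemma dp_assemble_t (r t : ℕ) (ht1 : 1 ≤ t) (htr : t ≤ r) :
    1 + t * dpCBt r t ≤ dpBt r t := by
  rcases Nat.even_or_odd r with ⟨s, hs⟩ | ⟨s, hs⟩
  · obtain ⟨m, hm⟩ : ∃ m, r = 2*m+2 := ⟨s - 1, by omega⟩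
    subst hm
    rw [dpCBt_even, show (2*m+2 : ℕ) = 2*(m+1) from by ring, dpBt_even (m+1),
        show (2*(m+1) : ℕ) = 2*m+2 from by ring]
    set A := dpA (2*m) with hA
    have hA1 : 1 ≤ A := dpA_pos _
    have hAe : dpA (2*m+2) = (m+1) * (m*A+1) := by rw [dpA_even, dpA_odd, ← hA]
    rcases Nat.lt_or_ge t (m+2) with h1 | h1
    · have hc : ¬ (2*m+2-t ≤ m) := by omega
      rw [if_neg hc, if_pos (show t ≤ m+1 by omega)]
      omega
    · have hc : 2*m+2-t ≤ m := by omega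
      rw [if_pos hc]
      obtain ⟨c, hc2⟩ : ∃ c, 2*m+2-t = c := ⟨_, rfl⟩
      have hct : c + t = 2*m+2 := by omega
      rw [hc2, if_neg (show ¬ t ≤ m+1 by omega)]
      rcases Nat.eq_or_lt_of_le h1 with h2 | h2
      · have hcm : c = m := by omega
        subst hcm
        rw [if_pos (by omega), hAe]
        have hsub : (c+1) * (c*A+1) - 1 = (c+1)*c*A + c := by
          have : (c+1) * (c*A+1) = ((c+1)*c*A + c) + 1 := by ring
          omega
        rw [hsub, ← h2]
        nlinarith []
      · rw [if_neg (by omega), hAe]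
        rcases Nat.eq_zero_or_pos c with h3 | h3
        · subst h3
          nlinarith []
        · obtain ⟨f, hf⟩ : ∃ f, t = m+3+f := ⟨t - (m+3), by omega⟩
          have hcf : c + f + 1 = m := by omega
          subst hf
          subst hcf
          nlinarith [hA1, sq_nonneg f, sq_nonneg (f+1), sq_nonneg (f+2)]
  · have hs' : r = 2*s+1 := by omega
    subst hs'
    rw [dpCBt_odd, dpBt_odd]
    omega

lemma dpA_factorial_bound : ∀ M, 5 ≤ M →
    25 * dpA (2*M+1) + 25*(M+1) ≤ 57 * (Nat.factorial M)^2 := by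
  intro M
  induction M with
  | zero => omega
  | succ m ih =>
      intro hM
      rcases Nat.lt_or_ge m 5 with h | h
      · have : m = 4 := by omega
        subst this
        decide
      · have hb := ih h
        have h1 : dpA (2*(m+1)+1) = (m+1)*((m+1)*dpA (2*m+1)) + 1 := by
          rw [show 2*(m+1)+1 = 2*(m+1)+1 from rfl, dpA_odd (m+1),
              show 2*(m+1) = 2*m+2 from by ring, dpA_even]
        rw [h1, Nat.factorial_succ]
        have h2 : (((m+1) * m.factorial)^2) = (m+1)^2 * (m.factorial)^2 := by ring
        rw [h2]
        nlinarith [hb, sq_nonneg (m+1), Nat.mul_le_mul_left ((m+1)*(m+1)) hb]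

/-- final numeric comparison -/
lemma dp_final (M D n : ℕ) (hM : 5 ≤ M) (hn : n = 2*M+3) (hD5 : 5*D ≤ 2*n) (hD1 : 1 ≤ D) :
    125 * ((D-1) * ((min (2*M+2-D) (M+1)) * dpA (2*M)) + 1) ≤
      125*n^2 + 122*n*(Nat.factorial M)^2 := by
  have hmin : min (2*M+2-D) (M+1) ≤ M+1 := min_le_right _ _
  set A2 := dpA (2*M) with hA2
  set F := (Nat.factorial M)^2 with hF
  have hodd : dpA (2*M+1) = M * A2 + 1 := dpA_odd M
  have hfac := dpA_factorial_bound M hM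
  rw [hodd] at hfac
  -- 25*M*A2 + 25 + 25*(M+1) ≤ 57*F
  have key : 25*(M*A2) ≤ 57*F := by omega
  have f1 : 5*(D-1) ≤ 4*M+1 := by omega
  have f3 : 57*((4*M+1)*(M+1)) ≤ 122*((2*M+3)*M) := by nlinarith [hM]
  -- multiply: M * (125 * (D-1) * (M+1) * A2) ≤ M * (122*n*F)
  have g1 : (5*(D-1)) * ((M+1) * (25*(M*A2))) ≤ (4*M+1) * ((M+1) * (57*F)) :=
    Nat.mul_le_mul f1 (Nat.mul_le_mul_left _ key)
  have g2 : (4*M+1) * ((M+1) * (57*F)) = 57*((4*M+1)*(M+1)) * F := by ring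
  have g3 : 57*((4*M+1)*(M+1)) * F ≤ 122*((2*M+3)*M) * F :=
    Nat.mul_le_mul_right _ f3
  have g4 : M * (125 * ((D-1) * ((M+1) * A2))) ≤ M * (122*n*F) := by
    calc M * (125 * ((D-1) * ((M+1) * A2))) = (5*(D-1)) * ((M+1) * (25*(M*A2))) := by ring
    _ ≤ 122*((2*M+3)*M) * F := le_trans g1 (g2 ▸ g3)
    _ = M * (122*n*F) := by rw [hn]; ring
  have g5 : 125 * ((D-1) * ((M+1) * A2)) ≤ 122*n*F :=
    Nat.le_of_mul_le_mul_left g4 (by omega)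
  have g6 : 125 * ((D-1) * ((min (2*M+2-D) (M+1)) * A2)) ≤ 125 * ((D-1) * ((M+1) * A2)) := by
    exact Nat.mul_le_mul_left _ (Nat.mul_le_mul_left _ (Nat.mul_le_mul_right _ hmin))
  have g7 : 125 ≤ 125 * n^2 := by nlinarith [hn]
  calc 125 * ((D-1) * ((min (2*M+2-D) (M+1)) * A2) + 1)
      = 125 * ((D-1) * ((min (2*M+2-D) (M+1)) * A2)) + 125 := by ring
  _ ≤ 122*n*F + 125*n^2 := Nat.add_le_add (le_trans g6 g5) g7
  _ = 125*n^2 + 122*n*F := by ring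

/-! ### Combinatorial layer -/

open SimpleGraph Finset

section Comb

variable {V : Type} [Fintype V] [DecidableEq V] (G : SimpleGraph V) [DecidableRel G.Adj] (x₁ : V)

/-- finite set of interior vertex lists of paths from `u` to `x₁` avoiding `U`. -/
def pathsF : ℕ → V → Finset V → Finset (List V)
  | 0, u, _ => if G.Adj u x₁ then {[]} else ∅
  | (k+1), u, U => (if G.Adj u x₁ then {[]} else ∅) ∪
      (G.neighborFinset u \ insert x₁ U).biUnion
        (fun v => (pathsF k v (insert v U)).image (List.cons v))

variable {G}

lemma triangle_free_not_both (htf : G.CliqueFree 3) {u v : V} (huv : G.Adj u v)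
    (hu : G.Adj u x₁) (hv : G.Adj v x₁) : False := by
  exact htf {u, v, x₁} (SimpleGraph.is3Clique_triple_iff.2 ⟨huv, hu, hv⟩)

lemma triangle_free_disjoint_nbrs (htf : G.CliqueFree 3) {u v : V} (huv : G.Adj u v) :
    Disjoint (G.neighborFinset u) (G.neighborFinset v) := by
  rw [Finset.disjoint_left]
  intro w hw1 hw2
  rw [SimpleGraph.mem_neighborFinset] at hw1 hw2
  exact htf {u, v, w} (SimpleGraph.is3Clique_triple_iff.2 ⟨huv, hw1, hw2⟩)

lemma pathsF_card (htf : G.CliqueFree 3) :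
    ∀ (k : ℕ) (u : V) (U : Finset V),
      (pathsF G x₁ k u U).card ≤
        (if G.Adj u x₁
          then dpBt ((Finset.univ \ insert x₁ U).card) ((G.neighborFinset u \ insert x₁ U).card)
          else dpBf ((Finset.univ \ insert x₁ U).card) ((G.neighborFinset u \ insert x₁ U).card)) := by
  intro k
  induction k with
  | zero =>
      intro u U
      by_cases h : G.Adj u x₁ <;> simp only [pathsF, h, if_true, if_false]
      · simp only [Finset.card_singleton]
        exact dpBt_pos _ _
      · simp
  | succ k ih =>
      intro u U
      set r := (Finset.univ \ insert x₁ U).card with hr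
      set t := (G.neighborFinset u \ insert x₁ U).card with ht
      set T := G.neighborFinset u \ insert x₁ U with hT
      have htr : t ≤ r := Finset.card_le_card (by
        intro w hw
        simp only [hT, Finset.mem_sdiff] at hw
        simp [Finset.mem_sdiff, hw.2])
      -- bound each child
      have hchild : ∀ v ∈ T,
          (pathsF G x₁ k v (insert v U)).card ≤
            (if G.Adj u x₁ then dpCBt r t else dpCBf r t) := by
        intro v hv
        have hvadj : G.Adj u v := by
          have := (Finset.mem_sdiff.1 hv).1
          rwa [SimpleGraph.mem_neighborFinset] at this
        have hvx : v ≠ x₁ ∧ v ∉ U := by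
          have := (Finset.mem_sdiff.1 hv).2
          simp only [Finset.mem_insert, not_or] at this
          exact this
        have hr1 : 1 ≤ r := by
          rw [hr]
          refine Finset.card_pos.2 ⟨v, ?_⟩
          simp [hvx.1, hvx.2]
        have ht1 : 1 ≤ t := by
          rw [ht]; exact Finset.card_pos.2 ⟨v, hv⟩
        -- the new forbidden set
        have hins : insert x₁ (insert v U) = insert v (insert x₁ U) := Finset.insert_comm _ _ _
        have hrv : (Finset.univ \ insert x₁ (insert v U)).card = r - 1 := by
          rw [hins, Finset.sdiff_insert, Finset.card_erase_of_mem (by simp [hvx.1, hvx.2])]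
        -- disjointness bound
        set t' := (G.neighborFinset v \ insert x₁ (insert v U)).card with ht'
        have hsum : t' + t ≤ r := by
          have hNu : (G.neighborFinset u \ insert x₁ (insert v U)).card = t - 1 := by
            rw [hins, Finset.sdiff_insert, Finset.card_erase_of_mem (by exact hv)]
          have hdis : Disjoint (G.neighborFinset v \ insert x₁ (insert v U))
              (G.neighborFinset u \ insert x₁ (insert v U)) :=
            Finset.disjoint_of_subset_left Finset.sdiff_subset
              (Finset.disjoint_of_subset_right Finset.sdiff_subset
                (triangle_free_disjoint_nbrs htf hvadj.symm))
          have hsub : (G.neighborFinset v \ insert x₁ (insert v U)) ∪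
              (G.neighborFinset u \ insert x₁ (insert v U)) ⊆
              Finset.univ \ insert x₁ (insert v U) := by
            intro w hw
            rcases Finset.mem_union.1 hw with h | h <;>
              · simp only [Finset.mem_sdiff] at h ⊢
                exact ⟨Finset.mem_univ _, h.2⟩
          have := Finset.card_le_card hsub
          rw [Finset.card_union_of_disjoint hdis, hNu, hrv] at this
          omega
        have hcap : t' ≤ r - 1 := by
          have : (G.neighborFinset v \ insert x₁ (insert v U)) ⊆
              Finset.univ \ insert x₁ (insert v U) := by
            intro w hw
            simp only [Finset.mem_sdiff] at hw ⊢
            exact ⟨Finset.mem_univ _, hw.2⟩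
          have := Finset.card_le_card this
          omega
        have hIH := ih v (insert v U)
        rw [hrv] at hIH
        by_cases hfl : G.Adj u x₁
        · -- parent flagged : child unflagged
          have hfl' : ¬ G.Adj v x₁ := fun hv' =>
            triangle_free_not_both x₁ htf hvadj hfl hv'
          rw [if_pos hfl]
          rw [if_neg hfl'] at hIH
          exact le_trans hIH (dp_child_f r t t' hr1 ht1 htr hsum)
        · rw [if_neg hfl]
          by_cases hfl' : G.Adj v x₁
          · rw [if_pos hfl'] at hIH
            exact le_trans hIH (dp_child_t r t t' hr1 ht1 htr hsum)
          · rw [if_neg hfl'] at hIH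
            exact le_trans hIH (le_trans (dp_child_f r t t' hr1 ht1 htr hsum)
              (dp_cbt_le_cbf r t))
      -- assemble
      rcases Nat.eq_zero_or_pos t with ht0 | ht1
      · -- no children
        have hTe : T = ∅ := Finset.card_eq_zero.1 ht0
        by_cases hfl : G.Adj u x₁ <;>
          simp only [pathsF, hfl, if_true, if_false, ← hT, hTe, Finset.biUnion_empty,
            Finset.union_empty]
        · simpa using dpBt_pos r t
        · simp
      · have hcard : (pathsF G x₁ (k+1) u U).card ≤
            (if G.Adj u x₁ then 1 else 0) +
              t * (if G.Adj u x₁ then dpCBt r t else dpCBf r t) := by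
          have h1 : (pathsF G x₁ (k+1) u U).card ≤
              ((if G.Adj u x₁ then ({[]} : Finset (List V)) else ∅)).card +
              (T.biUnion (fun v => (pathsF G x₁ k v (insert v U)).image (List.cons v))).card := by
            simp only [pathsF, ← hT]
            exact Finset.card_union_le _ _
          have h2 : ((if G.Adj u x₁ then ({[]} : Finset (List V)) else ∅)).card =
              (if G.Adj u x₁ then 1 else 0) := by
            by_cases hfl : G.Adj u x₁ <;> simp [hfl]
          have h3 : (T.biUnion (fun v => (pathsF G x₁ k v (insert v U)).image (List.cons v))).card
              ≤ t * (if G.Adj u x₁ then dpCBt r t else dpCBf r t) := by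
            calc (T.biUnion (fun v => (pathsF G x₁ k v (insert v U)).image (List.cons v))).card
                ≤ ∑ v ∈ T, ((pathsF G x₁ k v (insert v U)).image (List.cons v)).card :=
                  Finset.card_biUnion_le
            _ ≤ ∑ v ∈ T, (if G.Adj u x₁ then dpCBt r t else dpCBf r t) := by
                  refine Finset.sum_le_sum (fun v hv => ?_)
                  exact le_trans (Finset.card_image_le) (hchild v hv)
            _ = t * (if G.Adj u x₁ then dpCBt r t else dpCBf r t) := by
                  rw [Finset.sum_const, ht, smul_eq_mul]
          omega
        refine le_trans hcard ?_
        by_cases hfl : G.Adj u x₁ <;> simp only [hfl, if_true, if_false]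
        · exact dp_assemble_t r t ht1 htr
        · simpa using dp_assemble_f r t ht1 htr

end Comb

/-! ### Walk layer -/

section WalkLayer

variable {V : Type} {G : SimpleGraph V}

open SimpleGraph Walk

lemma walk_support_inj : ∀ {a b : V} (p q : G.Walk a b), p.support = q.support → p = q := by
  intro a b p
  induction p with
  | nil =>
      intro q h
      cases q with
      | nil => rfl
      | cons h' q' =>
          rw [Walk.support_nil, Walk.support_cons] at h
          simp at h
  | @cons u v w hadj p' ih =>
      intro q h
      cases q with
      | nil =>
          rw [Walk.support_nil, Walk.support_cons] at h
          simp at h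
      | @cons _ v' _ h' q' =>
          rw [Walk.support_cons, Walk.support_cons] at h
          have h2 : p'.support = q'.support := by injection h
          have hv : v = v' := by
            have e1 := p'.support_eq_cons
            have e2 := q'.support_eq_cons
            rw [e1, e2] at h2
            injection h2
          subst hv
          rw [ih q' h2]

lemma support_eq_dropLast : ∀ {a b : V} (p : G.Walk a b),
    p.support = p.support.dropLast ++ [b] := by
  intro a b p
  induction p with
  | nil => rfl
  | @cons u v w h q ih =>
      rw [Walk.support_cons, List.dropLast_cons_of_ne_nil q.support_ne_nil,
        List.cons_append, ← ih]

lemma path_end_edge : ∀ {a b c : V} (q : G.Walk a b), q.IsPath → s(c, b) ∈ q.edges →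
    ∃ (q₁ : G.Walk a c) (e : G.Adj c b), q = q₁.concat e := by
  intro a b c q
  induction q with
  | nil => intro _ he; simp [Walk.edges_nil] at he
  | @cons u v w h q' ih =>
      intro hq he
      rw [Walk.edges_cons] at he
      rcases List.mem_cons.1 he with h1 | h1
      · rw [Sym2.eq_iff] at h1
        rcases h1 with ⟨hc, hb⟩ | ⟨hc, hb⟩
        · -- c = u, b( = w) = v
          subst hc
          subst hb
          have hq' : q'.IsPath := hq.of_cons
          have : q' = Walk.nil := Walk.isPath_iff_eq_nil.1 hq'
          subst this
          exact ⟨Walk.nil, h, (Walk.concat_nil h).symm⟩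
        · -- c = v, w = u : contradiction with path
          subst hb
          rw [Walk.cons_isPath_iff] at hq
          exact absurd q'.end_mem_support hq.2
      · obtain ⟨q₁, e, rfl⟩ := ih hq.of_cons h1
        exact ⟨Walk.cons h q₁, e, (Walk.concat_cons h q₁ e).symm⟩

lemma concat_isPath_iff {a b c : V} (q₁ : G.Walk a b) (e : G.Adj b c) :
    (q₁.concat e).IsPath ↔ q₁.IsPath ∧ c ∉ q₁.support := by
  rw [← SimpleGraph.Walk.isPath_reverse_iff, Walk.reverse_concat, Walk.cons_isPath_iff,
    SimpleGraph.Walk.isPath_reverse_iff, Walk.support_reverse, List.mem_reverse]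

end WalkLayer

section CycleLayer

variable {V : Type} {G : SimpleGraph V}

open SimpleGraph Walk

lemma cycle_through_edge_path {x₁ x₂ : V} (h21 : G.Adj x₂ x₁) (c : G.Walk x₂ x₂)
    (hc : c.IsCycle) (he : s(x₂, x₁) ∈ c.edges) :
    ∃ p : G.Walk x₂ x₁, p.IsPath ∧ c.toSubgraph = G.subgraphOfAdj h21 ⊔ p.toSubgraph := by
  cases c with
  | nil => simp [Walk.edges_nil] at he
  | @cons _ v _ h q =>
      have hq : q.IsPath := ((Walk.cons_isCycle_iff q h).1 hc).1
      rw [Walk.edges_cons] at he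
      rcases List.mem_cons.1 he with h1 | h1
      · -- first edge is x₂x₁, so v = x₁
        rw [Sym2.eq_iff] at h1
        rcases h1 with ⟨-, hb⟩ | ⟨hcv, hb⟩
        · subst hb
          refine ⟨q.reverse, hq.reverse, ?_⟩
          simp only [Walk.toSubgraph, Walk.toSubgraph_reverse]
        · -- x₂ = v and x₁ = x₂ : impossible since Adj x₂ x₁
          exact absurd hb.symm h21.ne
      · -- the edge is inside q, hence at its very end
        have he2 : s(x₁, x₂) ∈ q.edges := by rwa [Sym2.eq_swap] at h1
        obtain ⟨q₁, e, rfl⟩ := path_end_edge q hq he2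
        have hq₁ : ((Walk.cons h q₁) : G.Walk x₂ x₁).IsPath := by
          rw [Walk.cons_isPath_iff]
          rw [_root_.concat_isPath_iff] at hq
          exact ⟨hq.1, hq.2⟩
        refine ⟨Walk.cons h q₁, hq₁, ?_⟩
        rw [Walk.concat_eq_append]
        simp only [Walk.toSubgraph_append, Walk.toSubgraph]
        have habs : G.subgraphOfAdj e ⊔ G.singletonSubgraph x₂ = G.subgraphOfAdj e :=
          sup_eq_left.mpr (SimpleGraph.singletonSubgraph_snd_le_subgraphOfAdj)
        have hsym : G.subgraphOfAdj e = G.subgraphOfAdj h21 :=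
          (SimpleGraph.subgraphOfAdj_symm (G := G) e).symm
        rw [habs, hsym, sup_comm q₁.toSubgraph (G.subgraphOfAdj h21), ← sup_assoc,
          sup_comm (G.subgraphOfAdj h) (G.subgraphOfAdj h21), sup_assoc]

end CycleLayer

section Membership

variable {V : Type} [Fintype V] [DecidableEq V] {G : SimpleGraph V} [DecidableRel G.Adj] {x₁ : V}

open SimpleGraph Walk

lemma interior_mem_pathsF :
    ∀ (k : ℕ) (u : V) (U : Finset V) (p : G.Walk u x₁), p.IsPath → u ≠ x₁ →
      (∀ y ∈ p.support.tail, y ∉ U) → p.length ≤ k + 1 →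
      p.support.tail.dropLast ∈ pathsF G x₁ k u U := by
  intro k
  induction k with
  | zero =>
      intro u U p hp hux hU hlen
      cases p with
      | nil => exact absurd rfl hux
      | @cons _ v _ h q =>
          have hq0 : q.length = 0 := by
            have := Walk.length_cons h q; omega
          have hveq : v = x₁ := Walk.eq_of_length_eq_zero hq0
          subst hveq
          have : q = Walk.nil := (Walk.isPath_iff_eq_nil.1 hp.of_cons)
          subst this
          simp [pathsF, h]
  | succ k ih =>
      intro u U p hp hux hU hlen
      cases p with
      | nil => exact absurd rfl hux
      | @cons _ v _ h q =>
          by_cases hv : v = x₁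
          · subst hv
            have : q = Walk.nil := (Walk.isPath_iff_eq_nil.1 hp.of_cons)
            subst this
            simp only [Walk.support_cons, Walk.support_nil, List.tail_cons, List.dropLast_singleton]
            simp [pathsF, h]
          · -- interior step
            have hqpath : q.IsPath := hp.of_cons
            have hqtail_ne : q.support.tail ≠ [] := by
              intro hnil
              have h1 := q.support_eq_cons
              rw [hnil] at h1
              have h2 : q.support.length = 1 := by rw [h1]; rfl
              have h3 := Walk.length_support q
              have : q.length = 0 := by omega
              exact hv (Walk.eq_of_length_eq_zero this)
            have hstep : (Walk.cons h q).support.tail.dropLast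
                = v :: q.support.tail.dropLast := by
              rw [Walk.support_cons, List.tail_cons]
              conv_lhs => rw [q.support_eq_cons]
              exact List.dropLast_cons_of_ne_nil hqtail_ne
            rw [hstep]
            have hvU : v ∉ U := by
              apply hU
              rw [Walk.support_cons, List.tail_cons]
              rw [q.support_eq_cons]; simp
            have hnodup := hp.support_nodup
            rw [Walk.support_cons] at hnodup
            have hqnodup : q.support.Nodup := (List.nodup_cons.1 hnodup).2
            have hvnotint : v ∉ q.support.tail := by
              rw [q.support_eq_cons] at hqnodup
              exact (List.nodup_cons.1 hqnodup).1
            have hmem : v ∈ G.neighborFinset u \ insert x₁ U := by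
              simp only [Finset.mem_sdiff, SimpleGraph.mem_neighborFinset, Finset.mem_insert,
                not_or]
              exact ⟨h, hv, hvU⟩
            have hIH := ih v (insert v U) q hqpath hv (by
                intro y hy
                simp only [Finset.mem_insert, not_or]
                constructor
                · intro hyv; subst hyv; exact hvnotint hy
                · apply hU
                  rw [Walk.support_cons, List.tail_cons]
                  exact List.mem_of_mem_tail hy)
              (by have := Walk.length_cons h q; omega)
            simp only [pathsF]
            refine Finset.mem_union_right _ ?_
            refine Finset.mem_biUnion.2 ⟨v, hmem, ?_⟩
            exact Finset.mem_image.2 ⟨_, hIH, rfl⟩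

end Membership

/-! ### Final assembly -/

theorem stmt_18 (n : ℕ) (hno : Odd n) (hn : 13 ≤ n) {V : Type} [Fintype V]
    (G : SimpleGraph V) [DecidableRel G.Adj] (hcard : Fintype.card V = n)
    (htf : G.CliqueFree 3) (x₁ x₂ : V) (hadj : G.Adj x₁ x₂)
    (hdeg : (G.degree x₂ : ℝ) ≤ 2 / 5 * n) :
    (cycleCountThroughEdge G x₁ x₂ : ℝ) ≤
      (n : ℝ) ^ 2 + 0.976 * n * (((n - 3) / 2).factorial : ℝ) ^ 2 := by
  haveI : DecidableEq V := Classical.decEq V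
  have h21 : G.Adj x₂ x₁ := hadj.symm
  have hx12 : x₁ ≠ x₂ := hadj.ne
  obtain ⟨m, hm⟩ := hno
  set M : ℕ := (n - 3) / 2 with hMdef
  have hnM : n = 2*M+3 := by omega
  have hM5 : 5 ≤ M := by omega
  set D := G.degree x₂ with hD
  -- extraction of a path from each cycle subgraph
  have hex : ∀ H : {H : G.Subgraph //
      (∃ (u : V) (w : G.Walk u u), w.IsCycle ∧ w.toSubgraph = H) ∧ H.Adj x₁ x₂},
      ∃ p : G.Walk x₂ x₁, p.IsPath ∧
        (H : G.Subgraph) = G.subgraphOfAdj h21 ⊔ p.toSubgraph := by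
    rintro ⟨H, ⟨⟨u, w, hcyc, hws⟩, hadjH⟩⟩
    have hedge : s(x₁, x₂) ∈ w.edges := by
      have h1 : s(x₁, x₂) ∈ H.edgeSet := (SimpleGraph.Subgraph.mem_edgeSet).2 hadjH
      rw [← hws] at h1
      exact (Walk.mem_edges_toSubgraph w).1 h1
    have hedge2 : s(x₂, x₁) ∈ w.edges := by rwa [Sym2.eq_swap] at hedge
    have hsup : x₂ ∈ w.support := w.snd_mem_support_of_mem_edges hedge
    obtain ⟨p, hp, heq⟩ := cycle_through_edge_path h21 (w.rotate x₂ hsup) (hcyc.rotate hsup)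
      (((w.rotate_edges x₂ hsup).mem_iff).2 hedge2)
    refine ⟨p, hp, ?_⟩
    show H = _
    rw [← hws, ← Walk.toSubgraph_rotate w hsup, heq]
  choose pf hp1 hp2 using hex
  have hmem : ∀ H, (pf H).support.tail.dropLast ∈ pathsF G x₁ n x₂ {x₂} := by
    intro H
    apply interior_mem_pathsF n x₂ {x₂} (pf H) (hp1 H) h21.ne
    · intro y hy
      simp only [Finset.mem_singleton]
      intro hyx2
      subst hyx2
      have hnd := (hp1 H).support_nodup
      rw [(pf H).support_eq_cons] at hnd
      exact (List.nodup_cons.1 hnd).1 hy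
    · have := (hp1 H).length_lt
      omega
  have htail_ne : ∀ H, (pf H).support.tail ≠ [] := by
    intro H hnil
    have h1 : x₁ ∈ (pf H).support := Walk.end_mem_support _
    have h2 := (pf H).support_eq_cons
    rw [hnil] at h2
    rw [h2] at h1
    simp at h1
    exact hx12 h1
  have hrecon : ∀ H, (pf H).support.tail = (pf H).support.tail.dropLast ++ [x₁] := by
    intro H
    have h2 := support_eq_dropLast (pf H)
    have h3 := (pf H).support_eq_cons
    have h4 : (pf H).support.dropLast = x₂ :: (pf H).support.tail.dropLast := by
      conv_lhs => rw [h3]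
      exact List.dropLast_cons_of_ne_nil (htail_ne H)
    rw [h4] at h2
    conv_lhs at h2 => rw [h3]
    rw [List.cons_append] at h2
    injection h2
  have hinj : Function.Injective (fun H => (pf H).support.tail.dropLast) := by
    intro H1 H2 hEq
    simp only at hEq
    have htail : (pf H1).support.tail = (pf H2).support.tail := by
      rw [hrecon H1, hrecon H2, hEq]
    have hsupEq : (pf H1).support = (pf H2).support := by
      rw [(pf H1).support_eq_cons, (pf H2).support_eq_cons, htail]
    have hpEq : pf H1 = pf H2 := walk_support_inj _ _ hsupEq
    have := hp2 H1
    rw [hpEq, ← hp2 H2] at this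
    exact Subtype.ext this
  have hcount : cycleCountThroughEdge G x₁ x₂ ≤ (pathsF G x₁ n x₂ {x₂}).card := by
    rw [cycleCountThroughEdge]
    have h1 : Nat.card {H : G.Subgraph //
        (∃ (u : V) (w : G.Walk u u), w.IsCycle ∧ w.toSubgraph = H) ∧ H.Adj x₁ x₂}
        ≤ Nat.card {l : List V // l ∈ pathsF G x₁ n x₂ {x₂}} :=
      Nat.card_le_card_of_injective
        (fun H => ⟨(pf H).support.tail.dropLast, hmem H⟩)
        (fun a b h => hinj (congrArg Subtype.val h))
    rwa [Nat.card_eq_finsetCard] at h1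
  -- parameters at the root
  have hr0 : (Finset.univ \ insert x₁ ({x₂} : Finset V)).card = 2*M+1 := by
    rw [Finset.card_sdiff_of_subset (Finset.subset_univ _), Finset.card_univ, hcard,
      Finset.card_insert_of_notMem (by simp [hx12]), Finset.card_singleton]
    omega
  have hx1mem : x₁ ∈ G.neighborFinset x₂ := by rwa [SimpleGraph.mem_neighborFinset]
  have ht0 : (G.neighborFinset x₂ \ insert x₁ ({x₂} : Finset V)).card = D - 1 := by
    have hset : G.neighborFinset x₂ \ insert x₁ {x₂} = (G.neighborFinset x₂).erase x₁ := by
      ext y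
      simp only [Finset.mem_sdiff, Finset.mem_insert, Finset.mem_singleton, not_or,
        Finset.mem_erase, SimpleGraph.mem_neighborFinset]
      constructor
      · rintro ⟨h1, h2, h3⟩; exact ⟨h2, h1⟩
      · rintro ⟨h1, h2⟩
        refine ⟨h2, h1, fun hy => ?_⟩
        subst hy
        exact G.irrefl h2
    rw [hset, Finset.card_erase_of_mem hx1mem]
    rfl
  have hD1 : 1 ≤ D := by
    have := Finset.card_pos.2 ⟨x₁, hx1mem⟩
    exact this
  have hbound := pathsF_card x₁ htf n x₂ {x₂}
  rw [if_pos h21, hr0, ht0] at hbound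
  have hval : dpBt (2*M+1) (D-1) = (D-1) * (min (2*M+2-D) (M+1) * dpA (2*M)) + 1 := by
    rw [dpBt_odd M (D-1), show 2*M+1-(D-1) = 2*M+2-D from by omega]
  have hD5 : 5*D ≤ 2*n := by
    have h5 : ((5*D : ℕ) : ℝ) ≤ ((2*n : ℕ) : ℝ) := by push_cast; linarith
    exact_mod_cast h5
  have hfin := dp_final M D n hM5 hnM hD5 hD1
  have htot : 125 * (cycleCountThroughEdge G x₁ x₂) ≤
      125*n^2 + 122*n*(Nat.factorial M)^2 := by
    calc 125 * (cycleCountThroughEdge G x₁ x₂)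
        ≤ 125 * (pathsF G x₁ n x₂ {x₂}).card := Nat.mul_le_mul_left _ hcount
    _ ≤ 125 * dpBt (2*M+1) (D-1) := Nat.mul_le_mul_left _ hbound
    _ = 125 * ((D-1) * (min (2*M+2-D) (M+1) * dpA (2*M)) + 1) := by rw [hval]
    _ ≤ 125*n^2 + 122*n*(Nat.factorial M)^2 := by
        have := hfin
        calc 125 * ((D-1) * (min (2*M+2-D) (M+1) * dpA (2*M)) + 1)
            = 125 * ((D-1) * ((min (2*M+2-D) (M+1)) * dpA (2*M)) + 1) := by ring_nf
        _ ≤ 125*n^2 + 122*n*(Nat.factorial M)^2 := this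
  -- cast to ℝ
  have hreal : (125 : ℝ) * (cycleCountThroughEdge G x₁ x₂ : ℝ) ≤
      125*(n:ℝ)^2 + 122*(n:ℝ)*((Nat.factorial M : ℝ))^2 := by
    have := htot
    have hcast : ((125 * (cycleCountThroughEdge G x₁ x₂ ) : ℕ) : ℝ) ≤
        ((125*n^2 + 122*n*(Nat.factorial M)^2 : ℕ) : ℝ) := Nat.cast_le.2 this
    push_cast at hcast
    linarith
  have h0976 : (0.976 : ℝ) = 122/125 := by norm_num
  rw [h0976]
  linarith
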